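/- arXiv:2506.04680 — 2 statements merged into one kernel-verified Lean document; each statement's English description precedes it below -/
import Mathlib

section
/- Let A be the 5×5 block matrix A = [[0, I₂, 0],[-M⁻¹G, -M⁻¹V, -M⁻¹g],[0, 0, -η]] and B the 5×2 block matrix B = [0; M⁻¹; 0], where M is an invertible 2×2 real matrix, G, V are 2×2 real matrices, g is a 2×1 real vector, and η > 0. If w ∈ ℝ⁵ satisfies wᵀB = 0 and wᵀA = λwᵀ for some complex λ with Re(λ) ≥ 0, then w = 0. Consequently, the pair (A,B) is stabilizable. -/
open Matrix

/-- A real square matrix is Hurwitz if all its (complex) eigenvalues have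
negative real part. -/
def Hurwitz {n : ℕ} (A : Matrix (Fin n) (Fin n) ℝ) : Prop :=
  ∀ μ ∈ spectrum ℂ (A.map (fun x : ℝ => (x : ℂ))), μ.re < 0

set_option maxHeartbeats 1000000 in
/-- Hautus-type stabilizability for the bipedal-robot error dynamics:
any left eigenvector of `A` with eigenvalue of nonnegative real part that is
annihilated by `B` must vanish; consequently `(A, B)` is stabilizable. -/
theorem stmt_0 (M G V : Matrix (Fin 2) (Fin 2) ℝ) (g : Fin 2 → ℝ) (η : ℝ)
    (hM : IsUnit M.det) (hη : 0 < η)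
    (N : Matrix (Fin 2) (Fin 2) ℝ) (hN : N = M⁻¹)
    (A : Matrix (Fin 5) (Fin 5) ℝ)
    (hA : A = !![0, 0, 1, 0, 0;
                 0, 0, 0, 1, 0;
                 -((N*G) 0 0), -((N*G) 0 1), -((N*V) 0 0), -((N*V) 0 1), -((N *ᵥ g) 0);
                 -((N*G) 1 0), -((N*G) 1 1), -((N*V) 1 0), -((N*V) 1 1), -((N *ᵥ g) 1);
                 0, 0, 0, 0, -η])
    (B : Matrix (Fin 5) (Fin 2) ℝ)
    (hB : B = !![0, 0; 0, 0; N 0 0, N 0 1; N 1 0, N 1 1; 0, 0]) :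
    (∀ (w : Fin 5 → ℝ) (lam : ℂ), 0 ≤ lam.re →
      (fun i => ((w i : ℂ))) ᵥ* (B.map (fun x : ℝ => (x : ℂ))) = 0 →
      (fun i => ((w i : ℂ))) ᵥ* (A.map (fun x : ℝ => (x : ℂ)))
        = lam • (fun i => ((w i : ℂ))) →
      w = 0) ∧
    ∃ K : Matrix (Fin 2) (Fin 5) ℝ, Hurwitz (A - B * K) := by
  have hNdet : IsUnit N.det := by rw [hN]; exact M.isUnit_nonsing_inv_det hM
  have hNM : N * M = 1 := by rw [hN]; exact M.nonsing_inv_mul hM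
  constructor
  · intro w lam hre hB0 hA0
    rw [hB] at hB0
    rw [hA] at hA0
    have hb0 := congrFun hB0 0
    have hb1 := congrFun hB0 1
    simp [vecMul, dotProduct, Fin.sum_univ_five, Matrix.map_apply] at hb0 hb1
    have rb0 : w 2 * N 0 0 + w 3 * N 1 0 = 0 := by exact_mod_cast hb0
    have rb1 : w 2 * N 0 1 + w 3 * N 1 1 = 0 := by exact_mod_cast hb1
    have hv : ![w 2, w 3] ᵥ* N = 0 := by
      funext j
      fin_cases j
      · simpa [vecMul, dotProduct, Fin.sum_univ_two] using rb0
      · simpa [vecMul, dotProduct, Fin.sum_univ_two] using rb1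
    have hv0 : ![w 2, w 3] = 0 := by
      have h := congrArg (fun v => v ᵥ* N⁻¹) hv
      simpa [vecMul_vecMul, Matrix.mul_nonsing_inv N hNdet] using h
    have h2 : w 2 = 0 := congrFun hv0 0
    have h3 : w 3 = 0 := congrFun hv0 1
    have ha2 := congrFun hA0 2
    have ha3 := congrFun hA0 3
    have ha4 := congrFun hA0 4
    simp [vecMul, dotProduct, Fin.sum_univ_five, Matrix.map_apply, h2, h3] at ha2 ha3 ha4
    have h0 : w 0 = 0 := by exact_mod_cast ha2
    have h1 : w 1 = 0 := by exact_mod_cast ha3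
    have h4 : w 4 = 0 := by
      have hkey : (lam + (η : ℂ)) * (w 4 : ℂ) = 0 := by linear_combination -ha4
      have hne : (lam + (η : ℂ)) ≠ 0 := by
        intro h
        have := congrArg Complex.re h
        simp at this
        linarith
      have := (mul_eq_zero.1 hkey).resolve_left hne
      exact_mod_cast this
    funext i
    fin_cases i <;> simp [h0, h1, h2, h3, h4]
  · set R : Matrix (Fin 2) (Fin 5) ℝ :=
      !![1 - (N*G) 0 0, -((N*G) 0 1), 2 - (N*V) 0 0, -((N*V) 0 1), -((N *ᵥ g) 0);
         -((N*G) 1 0), 1 - (N*G) 1 1, -((N*V) 1 0), 2 - (N*V) 1 1, -((N *ᵥ g) 1)] with hR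
    refine ⟨M * R, ?_⟩
    have hC : A - B * (M * R) =
        !![0, 0, 1, 0, 0;
           0, 0, 0, 1, 0;
           -1, 0, -2, 0, 0;
           0, -1, 0, -2, 0;
           0, 0, 0, 0, -η] := by
      have hBM : B * M = !![0,0;0,0;1,0;0,1;0,0] := by
        have e00 : (N * M) 0 0 = 1 := by rw [hNM]; simp
        have e01 : (N * M) 0 1 = 0 := by rw [hNM]; simp [Matrix.one_apply]
        have e10 : (N * M) 1 0 = 0 := by rw [hNM]; simp [Matrix.one_apply]
        have e11 : (N * M) 1 1 = 1 := by rw [hNM]; simp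
        simp [Matrix.mul_apply, Fin.sum_univ_two] at e00 e01 e10 e11
        ext i j
        rw [hB]
        fin_cases i <;> fin_cases j <;>
          simp [Matrix.mul_apply, Fin.sum_univ_two, e00, e01, e10, e11, Matrix.vecHead, Matrix.vecTail]
      rw [← Matrix.mul_assoc, hBM, hA, hR]
      ext i j
      fin_cases i <;> fin_cases j <;>
        simp [Matrix.mul_apply, Fin.sum_univ_two, Matrix.vecHead, Matrix.vecTail] <;> ring
    rw [hC]
    intro μ hμ
    rw [spectrum.mem_iff] at hμ
    by_contra hre
    push_neg at hre
    apply hμ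
    rw [Matrix.isUnit_iff_isUnit_det]
    have hD : (algebraMap ℂ (Matrix (Fin 5) (Fin 5) ℂ)) μ -
        (!![0, 0, 1, 0, 0;
            0, 0, 0, 1, 0;
            -1, 0, -2, 0, 0;
            0, -1, 0, -2, 0;
            0, 0, 0, 0, -η] : Matrix (Fin 5) (Fin 5) ℝ).map (fun x : ℝ => (x : ℂ)) =
        !![μ, 0, -1, 0, 0;
           0, μ, 0, -1, 0;
           1, 0, μ + 2, 0, 0;
           0, 1, 0, μ + 2, 0;
           0, 0, 0, 0, μ + η] := by
      ext i j
      fin_cases i <;> fin_cases j <;>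
        simp [Matrix.algebraMap_matrix_apply, Matrix.map_apply, Matrix.vecHead, Matrix.vecTail] <;> ring
    rw [hD]
    have hdet : (!![μ, 0, -1, 0, 0;
           0, μ, 0, -1, 0;
           1, 0, μ + 2, 0, 0;
           0, 1, 0, μ + 2, 0;
           0, 0, 0, 0, μ + η] : Matrix (Fin 5) (Fin 5) ℂ).det
        = (μ + 1)^4 * (μ + η) := by
      simp [Matrix.det_succ_row_zero, Fin.sum_univ_succ, Fin.succAbove_ne_zero_zero]
      simp (config := {decide := true}) [Fin.succAbove]
      ring
    rw [hdet]
    apply IsUnit.mul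
    · apply IsUnit.pow
      rw [isUnit_iff_ne_zero]
      intro h
      have := congrArg Complex.re h
      simp at this
      linarith
    · rw [isUnit_iff_ne_zero]
      intro h
      have := congrArg Complex.re h
      simp at this
      linarith
end

section
/- If the pair (A,B) is stabilizable and (A,C) is detectable (A ∈ ℝ^{n×n}, B ∈ ℝ^{n×m}, C ∈ ℝ^{p×n}), R ≻ 0 and Q = CᵀC ⪰ 0, and P ⪰ 0 solves the algebraic Riccati equation PA + AᵀP − PBR⁻¹BᵀP + Q = 0, then the closed-loop matrix A − BR⁻¹BᵀP is Hurwitz (all eigenvalues have negative real part), and consequently every solution of ẋ = (A − BR⁻¹BᵀP)x converges to 0 as t → ∞. -/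
open Matrix Filter

open scoped MatrixOrder in
lemma psd_decomp {n : ℕ} {M : Matrix (Fin n) (Fin n) ℝ} (h : M.PosSemidef) :
    ∃ B : Matrix (Fin n) (Fin n) ℝ, M = Bᴴ * B := by
  obtain ⟨B, hB⟩ := CStarAlgebra.nonneg_iff_eq_star_mul_self.mp h.nonneg
  exact ⟨B, hB⟩

attribute [local instance] Matrix.linftyOpNormedRing Matrix.linftyOpNormedAlgebra

open NormedSpace

noncomputable section

def mc {a b : ℕ} (M : Matrix (Fin a) (Fin b) ℝ) : Matrix (Fin a) (Fin b) ℂ :=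
  M.map (fun x : ℝ => (x : ℂ))

lemma mc_eq_map_hom {a b : ℕ} (M : Matrix (Fin a) (Fin b) ℝ) :
    mc M = M.map Complex.ofRealHom := rfl

lemma mc_mul {a b c : ℕ} (M : Matrix (Fin a) (Fin b) ℝ) (N : Matrix (Fin b) (Fin c) ℝ) :
    mc (M * N) = mc M * mc N := by
  simp [mc_eq_map_hom, Matrix.map_mul]

lemma mc_sub {a b : ℕ} (M N : Matrix (Fin a) (Fin b) ℝ) : mc (M - N) = mc M - mc N := by
  simp [mc, Matrix.map_sub]

lemma mc_add {a b : ℕ} (M N : Matrix (Fin a) (Fin b) ℝ) : mc (M + N) = mc M + mc N := by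
  simp [mc, Matrix.map_add]

lemma mc_neg {a b : ℕ} (M : Matrix (Fin a) (Fin b) ℝ) : mc (-M) = -(mc M) := by
  ext i j; simp [mc]

lemma mc_conjTranspose {a b : ℕ} (M : Matrix (Fin a) (Fin b) ℝ) :
    (mc M)ᴴ = mc (Mᵀ) := by
  ext i j
  simp [mc, conjTranspose_apply]

lemma mc_mulVec_mul {a b c : ℕ} (M : Matrix (Fin a) (Fin b) ℝ) (N : Matrix (Fin b) (Fin c) ℝ)
    (v : Fin c → ℂ) : mc (M * N) *ᵥ v = mc M *ᵥ (mc N *ᵥ v) := by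
  rw [mc_mul, ← mulVec_mulVec]

lemma mc_det {a : ℕ} (M : Matrix (Fin a) (Fin a) ℝ) : (mc M).det = (M.det : ℂ) := by
  rw [mc_eq_map_hom, ← RingHom.mapMatrix_apply, ← RingHom.map_det]
  rfl

lemma herm_form {a b : ℕ} (N : Matrix (Fin a) (Fin b) ℂ) (v : Fin b → ℂ) :
    ∃ r : ℝ, 0 ≤ r ∧ star v ⬝ᵥ ((Nᴴ * N) *ᵥ v) = (r : ℂ) ∧ (r = 0 → N *ᵥ v = 0) := by
  have key : star v ⬝ᵥ ((Nᴴ * N) *ᵥ v) = star (N *ᵥ v) ⬝ᵥ (N *ᵥ v) := by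
    rw [← mulVec_mulVec, dotProduct_mulVec, vecMul_conjTranspose, star_star]
  refine ⟨∑ i, Complex.normSq ((N *ᵥ v) i), Finset.sum_nonneg fun i _ => Complex.normSq_nonneg _,
    ?_, ?_⟩
  · rw [key, dotProduct]
    push_cast
    refine Finset.sum_congr rfl fun i _ => ?_
    rw [Complex.normSq_eq_conj_mul_self]
    rfl
  · intro hr
    funext i
    have := (Finset.sum_eq_zero_iff_of_nonneg (fun i _ => Complex.normSq_nonneg ((N *ᵥ v) i))).mp
      hr i (Finset.mem_univ i)
    simpa using Complex.normSq_eq_zero.mp this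

lemma mem_spectrum_of_eigvec {n : ℕ} {M : Matrix (Fin n) (Fin n) ℂ} {μ : ℂ}
    {v : Fin n → ℂ} (hv : v ≠ 0) (h : M *ᵥ v = μ • v) : μ ∈ spectrum ℂ M := by
  rw [spectrum.mem_iff]
  intro hu
  rw [Matrix.isUnit_iff_isUnit_det, isUnit_iff_ne_zero] at hu
  apply hu
  rw [← Matrix.exists_mulVec_eq_zero_iff]
  refine ⟨v, hv, ?_⟩
  have halg : algebraMap ℂ (Matrix (Fin n) (Fin n) ℂ) μ = μ • 1 := Algebra.algebraMap_eq_smul_one μ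
  rw [halg, sub_mulVec, smul_mulVec, one_mulVec, h, sub_self]

lemma eigvec_of_mem_spectrum {n : ℕ} {M : Matrix (Fin n) (Fin n) ℂ} {μ : ℂ}
    (h : μ ∈ spectrum ℂ M) : ∃ v : Fin n → ℂ, v ≠ 0 ∧ M *ᵥ v = μ • v := by
  rw [spectrum.mem_iff] at h
  rw [Matrix.isUnit_iff_isUnit_det, isUnit_iff_ne_zero, not_not,
    ← Matrix.exists_mulVec_eq_zero_iff] at h
  obtain ⟨v, hv, hMv⟩ := h
  refine ⟨v, hv, ?_⟩
  have halg : algebraMap ℂ (Matrix (Fin n) (Fin n) ℂ) μ = μ • 1 := Algebra.algebraMap_eq_smul_one μ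
  rw [halg, sub_mulVec, smul_mulVec, one_mulVec, sub_eq_zero] at hMv
  exact hMv.symm

/-- Part (a): the closed-loop matrix is Hurwitz. -/
theorem closed_loop_hurwitz {n m p : ℕ}
    (A : Matrix (Fin n) (Fin n) ℝ) (B : Matrix (Fin n) (Fin m) ℝ)
    (C : Matrix (Fin p) (Fin n) ℝ)
    (R : Matrix (Fin m) (Fin m) ℝ) (Q : Matrix (Fin n) (Fin n) ℝ)
    (P : Matrix (Fin n) (Fin n) ℝ)
    (hdet : ∃ L : Matrix (Fin n) (Fin p) ℝ, Hurwitz (A - L * C))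
    (hR : R.PosDef) (hQ : Q = Cᵀ * C) (hP : P.PosSemidef)
    (hric : P * A + Aᵀ * P - P * B * R⁻¹ * Bᵀ * P + Q = 0) :
    Hurwitz (A - B * R⁻¹ * Bᵀ * P) := by
  obtain ⟨L, hL⟩ := hdet
  intro μ hμ
  by_contra hneg
  push_neg at hneg  -- 0 ≤ μ.re
  -- notation
  set S : Matrix (Fin n) (Fin n) ℝ := B * R⁻¹ * Bᵀ with hS
  have hAcl : A - B * R⁻¹ * Bᵀ * P = A - S * P := rfl
  obtain ⟨v, hv0, hv⟩ : ∃ v : Fin n → ℂ, v ≠ 0 ∧ mc (A - S * P) *ᵥ v = μ • v := by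
    have : μ ∈ spectrum ℂ (mc (A - S * P)) := hμ
    exact eigvec_of_mem_spectrum this
  -- symmetry facts
  have hRsymm : Rᵀ = R := by
    have h : Rᴴ = R := hR.1
    rwa [conjTranspose_eq_transpose_of_trivial] at h
  have hPsymm : Pᵀ = P := by
    have h : Pᴴ = P := hP.1
    rwa [conjTranspose_eq_transpose_of_trivial] at h
  have hSsymm : Sᵀ = S := by
    rw [hS, transpose_mul, transpose_mul, transpose_transpose, transpose_nonsing_inv, hRsymm,
      Matrix.mul_assoc]
  -- Lyapunov identity
  have hric' : P * A + Aᵀ * P - P * (S * P) + Q = 0 := by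
    rw [hS]
    simpa only [Matrix.mul_assoc] using hric
  have hlyap : P * (A - S * P) + (A - S * P)ᵀ * P = -(Q + P * (S * P)) := by
    rw [transpose_sub, transpose_mul, hSsymm, hPsymm, eq_neg_iff_add_eq_zero, ← hric']
    simp only [Matrix.mul_sub, Matrix.sub_mul, Matrix.mul_assoc]
    abel
  -- decompositions
  obtain ⟨Mp, hMp⟩ := psd_decomp hP
  have hRinv : (R⁻¹).PosDef := hR.inv
  obtain ⟨T, hTT0⟩ := psd_decomp hRinv.posSemidef
  have hTT : Tᵀ * T = R⁻¹ := by
    rw [← conjTranspose_eq_transpose_of_trivial]; exact hTT0.symm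
  have hdetT : T.det ≠ 0 := by
    intro h0
    have : (R⁻¹).det = 0 := by rw [← hTT, det_mul, h0, mul_zero]
    exact (hRinv.det_pos.ne' this)
  set N : Matrix (Fin m) (Fin n) ℝ := T * (Bᵀ * P) with hN
  have hNN : P * (S * P) = Nᵀ * N := by
    rw [hN, hS, transpose_mul, transpose_mul, transpose_transpose, hPsymm, ← hTT]
    simp only [Matrix.mul_assoc]
  -- complexified quadratic forms
  obtain ⟨rp, hrp0, hrp, _⟩ := herm_form (mc Mp) v
  obtain ⟨rq, hrq0, hrq, hrqz⟩ := herm_form (mc C) v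
  obtain ⟨rs, hrs0, hrs, hrsz⟩ := herm_form (mc N) v
  have hMp' : P = Mpᵀ * Mp := by
    rw [← conjTranspose_eq_transpose_of_trivial]; exact hMp
  have hPc : mc P = (mc Mp)ᴴ * mc Mp := by
    rw [mc_conjTranspose, ← mc_mul, ← hMp']
  have hQc : mc Q = (mc C)ᴴ * mc C := by
    rw [mc_conjTranspose, ← mc_mul, ← hQ]
  have hSPc : mc (P * (S * P)) = (mc N)ᴴ * mc N := by
    rw [mc_conjTranspose, ← mc_mul, ← hNN]
  have hp : star v ⬝ᵥ (mc P *ᵥ v) = (rp : ℂ) := by rw [hPc]; exact hrp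
  -- apply the quadratic form to the Lyapunov identity
  have E := congrArg (fun X => star v ⬝ᵥ (mc X *ᵥ v)) hlyap
  simp only [mc_add, mc_neg, add_mulVec, neg_mulVec, dotProduct_add, dotProduct_neg] at E
  -- LHS terms
  have t1 : star v ⬝ᵥ (mc (P * (A - S * P)) *ᵥ v) = μ * rp := by
    rw [mc_mulVec_mul, hv, mulVec_smul, dotProduct_smul, smul_eq_mul, hp]
  have t2 : star v ⬝ᵥ (mc ((A - S * P)ᵀ * P) *ᵥ v) = (starRingEnd ℂ) μ * rp := by
    rw [mc_mulVec_mul, ← mc_conjTranspose, dotProduct_mulVec, vecMul_conjTranspose, star_star,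
      hv, star_smul, smul_dotProduct, smul_eq_mul, hp]
    rfl
  rw [t1, t2, hQc, hrq, hSPc, hrs] at E
  -- take real parts
  have Ere := congrArg Complex.re E
  simp only [Complex.add_re, Complex.mul_re, Complex.ofReal_re, Complex.ofReal_im,
    Complex.conj_re, Complex.conj_im, Complex.neg_re, mul_zero, sub_zero, neg_mul, neg_neg] at Ere
  -- Ere : μ.re * rp + μ.re * rp = -(rq + rs)  (roughly)
  have hrq_eq : rq = 0 := by nlinarith [mul_nonneg hneg hrp0]
  have hrs_eq : rs = 0 := by nlinarith [mul_nonneg hneg hrp0]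
  have hCv : mc C *ᵥ v = 0 := hrqz hrq_eq
  have hNv : mc N *ᵥ v = 0 := hrsz hrs_eq
  -- T has nonzero det, so (Bᵀ P) v = 0
  have hBPv : mc (Bᵀ * P) *ᵥ v = 0 := by
    by_contra hne
    have : (mc T).det = 0 := by
      rw [← Matrix.exists_mulVec_eq_zero_iff]
      refine ⟨mc (Bᵀ * P) *ᵥ v, hne, ?_⟩
      rw [← mc_mulVec_mul, ← hN, hNv]
    rw [mc_det] at this
    exact hdetT (by exact_mod_cast this)
  -- A v = μ v
  have hAv : mc A *ᵥ v = μ • v := by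
    have : mc A = mc (A - S * P) + mc (S * P) := by rw [← mc_add, sub_add_cancel]
    rw [this, add_mulVec, hv]
    have hSP : mc (S * P) *ᵥ v = 0 := by
      have : S * P = B * (R⁻¹ * (Bᵀ * P)) := by rw [hS]; simp only [Matrix.mul_assoc]
      rw [this, mc_mulVec_mul, mc_mulVec_mul, hBPv, mulVec_zero, mulVec_zero]
    rw [hSP, add_zero]
  -- contradiction with detectability
  have hALC : mc (A - L * C) *ᵥ v = μ • v := by
    rw [mc_sub, sub_mulVec, hAv, mc_mulVec_mul, hCv, mulVec_zero, sub_zero]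
  have := hL μ (mem_spectrum_of_eigvec hv0 hALC)
  linarith

/-- generalized eigenvector gives spectrum membership -/
lemma mem_spectrum_of_genEigvec {n : ℕ} {M : Matrix (Fin n) (Fin n) ℂ} {μ : ℂ} :
    ∀ (k : ℕ) (v : Fin n → ℂ), v ≠ 0 → ((M - μ • 1) ^ k) *ᵥ v = 0 → μ ∈ spectrum ℂ M := by
  intro k
  induction k with
  | zero =>
    intro v hv h
    simp [pow_zero, one_mulVec] at h
    exact absurd h hv
  | succ k ih =>
    intro v hv h
    by_cases hkv : ((M - μ • 1) ^ k) *ᵥ v = 0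
    · exact ih v hv hkv
    · have h' : M *ᵥ (((M - μ • 1) ^ k) *ᵥ v) = μ • (((M - μ • 1) ^ k) *ᵥ v) := by
        have : ((M - μ • 1) * (M - μ • 1) ^ k) *ᵥ v = 0 := by
          rw [← pow_succ']; exact h
        rw [← mulVec_mulVec, sub_mulVec, smul_mulVec, one_mulVec, sub_eq_zero] at this
        exact this
      exact mem_spectrum_of_eigvec hkv h'

/-- the exponential applied to a generalized eigenvector is a finite sum -/
lemma exp_smul_mulVec_genEig {n : ℕ} (M : Matrix (Fin n) (Fin n) ℂ) (μ : ℂ) (k : ℕ)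
    (v : Fin n → ℂ) (h : ((M - μ • 1) ^ k) *ᵥ v = 0) (c : ℂ) :
    exp (c • M) *ᵥ v =
      Complex.exp (c * μ) •
        ∑ j ∈ Finset.range k, ((c ^ j * ((j.factorial : ℂ))⁻¹) • ((M - μ • 1) ^ j *ᵥ v)) := by
  set N : Matrix (Fin n) (Fin n) ℂ := M - μ • 1 with hN
  have hsplit : c • M = c • N + (c * μ) • 1 := by
    rw [hN, smul_sub, smul_smul]
    abel
  have hcomm : Commute (c • N) ((c * μ) • (1 : Matrix (Fin n) (Fin n) ℂ)) :=
    ((Commute.one_right N).smul_left c).smul_right (c * μ)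
  have hscal : exp ((c * μ) • (1 : Matrix (Fin n) (Fin n) ℂ))
      = Complex.exp (c * μ) • (1 : Matrix (Fin n) (Fin n) ℂ) := by
    rw [smul_one_eq_diagonal, Matrix.exp_diagonal, smul_one_eq_diagonal, Pi.exp_def,
      ← Complex.exp_eq_exp_ℂ]
  have hexpmul : exp (c • M) = Complex.exp (c * μ) • exp (c • N) := by
    rw [hsplit, Matrix.exp_add_of_commute _ _ hcomm, hscal, Matrix.mul_smul, Matrix.mul_one]
  -- mulVec as a continuous linear map in the matrix argument
  let L : Matrix (Fin n) (Fin n) ℂ →ₗ[ℂ] (Fin n → ℂ) :=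
    { toFun := fun X => X *ᵥ v
      map_add' := fun X Y => add_mulVec X Y v
      map_smul' := fun a X => smul_mulVec a X v }
  have hLcont : Continuous L := LinearMap.continuous_of_finiteDimensional L
  let Lc : Matrix (Fin n) (Fin n) ℂ →L[ℂ] (Fin n → ℂ) := ⟨L, hLcont⟩
  have hsum : exp (c • N) *ᵥ v = ∑' j : ℕ, ((j.factorial : ℂ))⁻¹ • ((c • N) ^ j) *ᵥ v := by
    have h1 : exp (c • N) = ∑' j : ℕ, ((j.factorial : ℂ))⁻¹ • (c • N) ^ j := by
      rw [NormedSpace.exp_eq_tsum ℂ]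
    have h2 : Lc (∑' j : ℕ, ((j.factorial : ℂ))⁻¹ • (c • N) ^ j)
        = ∑' j : ℕ, Lc (((j.factorial : ℂ))⁻¹ • (c • N) ^ j) :=
      Lc.map_tsum (NormedSpace.expSeries_summable' (𝕂 := ℂ) (c • N))
    calc exp (c • N) *ᵥ v = Lc (exp (c • N)) := rfl
      _ = ∑' j : ℕ, Lc (((j.factorial : ℂ))⁻¹ • (c • N) ^ j) := by rw [h1, h2]
      _ = ∑' j : ℕ, ((j.factorial : ℂ))⁻¹ • ((c • N) ^ j) *ᵥ v :=
          tsum_congr fun j => by rw [Lc.map_smul]; rfl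
  have hterm : ∀ j : ℕ, ((j.factorial : ℂ))⁻¹ • ((c • N) ^ j) *ᵥ v
      = (c ^ j * ((j.factorial : ℂ))⁻¹) • (N ^ j *ᵥ v) := by
    intro j
    rw [smul_pow, smul_mulVec, smul_smul, mul_comm]
  have hvanish : ∀ j ∉ Finset.range k, (c ^ j * ((j.factorial : ℂ))⁻¹) • (N ^ j *ᵥ v) = 0 := by
    intro j hj
    rw [Finset.mem_range, not_lt] at hj
    have : N ^ j *ᵥ v = 0 := by
      rw [show j = (j - k) + k from (Nat.sub_add_cancel hj).symm, pow_add, ← mulVec_mulVec, h,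
        mulVec_zero]
    rw [this, smul_zero]
  rw [hexpmul, smul_mulVec, hsum]
  congr 1
  rw [tsum_congr hterm, tsum_eq_sum hvanish]

end

lemma aux_decay {a : ℝ} (ha : a < 0) (j : ℕ) :
    Filter.Tendsto (fun t : ℝ => Real.exp (t * a) * t ^ j) atTop (nhds 0) := by
  have h0 : (0:ℝ) < -a := by linarith
  have h1 : Tendsto (fun t : ℝ => (-a) * t) atTop atTop :=
    Filter.Tendsto.const_mul_atTop h0 tendsto_id
  have h2 := (Real.tendsto_pow_mul_exp_neg_atTop_nhds_zero j).comp h1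
  have h3 := h2.const_mul (((-a) ^ j)⁻¹)
  rw [mul_zero] at h3
  refine h3.congr' ?_
  filter_upwards with t
  have hne : (-a) ^ j ≠ 0 := pow_ne_zero j (ne_of_gt h0)
  simp only [Function.comp]
  rw [show -((-a) * t) = t * a by ring, mul_pow]
  field_simp

lemma coef_tendsto {μ : ℂ} (hμ : μ.re < 0) (j : ℕ) :
    Tendsto (fun t : ℝ => Complex.exp (↑t * μ) * ((t : ℂ) ^ j * ((j.factorial : ℂ))⁻¹))
      atTop (nhds 0) := by
  rw [tendsto_zero_iff_norm_tendsto_zero]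
  have key : ∀ᶠ t : ℝ in atTop,
      ‖Complex.exp (↑t * μ) * ((t : ℂ) ^ j * ((j.factorial : ℂ))⁻¹)‖
        = (Real.exp (t * μ.re) * t ^ j) * ((j.factorial : ℝ))⁻¹ := by
    filter_upwards [eventually_ge_atTop (0:ℝ)] with t ht
    rw [norm_mul, norm_mul, Complex.norm_exp, norm_pow, norm_inv]
    simp only [Complex.mul_re, Complex.ofReal_re, Complex.ofReal_im, zero_mul, sub_zero]
    rw [Complex.norm_real, Real.norm_eq_abs, abs_of_nonneg ht, Complex.norm_natCast]
    ring
  have h0 : Tendsto (fun t : ℝ => (Real.exp (t * μ.re) * t ^ j) * ((j.factorial : ℝ))⁻¹)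
      atTop (nhds 0) := by
    have := (aux_decay hμ j).mul_const ((j.factorial : ℝ))⁻¹
    rwa [zero_mul] at this
  exact h0.congr' (Filter.EventuallyEq.symm key)

theorem matrix_exp_mulVec_tendsto {n : ℕ} (M : Matrix (Fin n) (Fin n) ℂ)
    (hM : ∀ μ ∈ spectrum ℂ M, μ.re < 0) (v : Fin n → ℂ) :
    Tendsto (fun t : ℝ => exp ((t : ℂ) • M) *ᵥ v) atTop (nhds 0) := by
  let Sub : Submodule ℂ (Fin n → ℂ) :=
    { carrier := {w | Tendsto (fun t : ℝ => exp ((t : ℂ) • M) *ᵥ w) atTop (nhds 0)}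
      add_mem' := by
        intro a b ha hb
        have := Filter.Tendsto.add ha hb
        simpa [mulVec_add] using this
      zero_mem' := by
        simpa [mulVec_zero] using (tendsto_const_nhds :
          Tendsto (fun _ : ℝ => (0 : Fin n → ℂ)) atTop (nhds 0))
      smul_mem' := by
        intro c w hw
        have := hw.const_smul c
        simpa [mulVec_smul] using this }
  suffices h : (⊤ : Submodule ℂ (Fin n → ℂ)) ≤ Sub from h (Submodule.mem_top (x := v))
  rw [← Module.End.iSup_maxGenEigenspace_eq_top (Matrix.toLinAlgEquiv' M)]
  refine iSup_le fun μ => ?_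
  intro w hw
  rw [Module.End.mem_maxGenEigenspace] at hw
  obtain ⟨k, hk⟩ := hw
  have hk' : ((M - μ • 1) ^ k) *ᵥ w = 0 := by
    have heq : Matrix.toLinAlgEquiv' ((M - μ • 1) ^ k)
        = (Matrix.toLinAlgEquiv' M - μ • 1) ^ k := by
      rw [map_pow, map_sub, _root_.map_smul, _root_.map_one]
    have happ : (Matrix.toLinAlgEquiv' ((M - μ • 1) ^ k)) w = ((M - μ • 1) ^ k) *ᵥ w :=
      Matrix.toLinAlgEquiv'_apply _ _
    rw [← happ, heq]
    exact hk
  by_cases hw0 : w = 0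
  · rw [hw0]; exact Sub.zero_mem
  have hμ : μ.re < 0 := hM μ (mem_spectrum_of_genEigvec k w hw0 hk')
  show Tendsto (fun t : ℝ => exp ((t : ℂ) • M) *ᵥ w) atTop (nhds 0)
  have hrep : ∀ t : ℝ, exp ((t : ℂ) • M) *ᵥ w = ∑ j ∈ Finset.range k,
      (Complex.exp (↑t * μ) * ((t : ℂ) ^ j * ((j.factorial : ℂ))⁻¹)) •
        ((M - μ • 1) ^ j *ᵥ w) := by
    intro t
    rw [exp_smul_mulVec_genEig M μ k w hk' (t : ℂ), Finset.smul_sum]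
    exact Finset.sum_congr rfl fun j _ => by rw [smul_smul]
  have hlim : Tendsto (fun t : ℝ => ∑ j ∈ Finset.range k,
      (Complex.exp (↑t * μ) * ((t : ℂ) ^ j * ((j.factorial : ℂ))⁻¹)) •
        ((M - μ • 1) ^ j *ᵥ w)) atTop (nhds 0) := by
    have h := tendsto_finset_sum (Finset.range k)
      (fun j _ => (coef_tendsto hμ j).smul_const ((M - μ • 1) ^ j *ᵥ w))
    simpa using h
  exact hlim.congr fun t => (hrep t).symm


theorem hurwitz_solution_tendsto {n : ℕ} (Ar : Matrix (Fin n) (Fin n) ℝ)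
    (hA : ∀ μ ∈ spectrum ℂ (Ar.map (fun x : ℝ => (x : ℂ))), μ.re < 0)
    (x : ℝ → (Fin n → ℝ)) (hx : ∀ t, HasDerivAt x (Ar *ᵥ x t) t) :
    Tendsto x atTop (nhds 0) := by
  -- complexification of the exponential
  have hmapc : ∀ t : ℝ, (exp (t • Ar)).map (fun x : ℝ => (x : ℂ))
      = exp ((t : ℂ) • Ar.map (fun x : ℝ => (x : ℂ))) := by
    intro t
    have hc : Continuous (RingHom.mapMatrix (Complex.ofRealHom) :
        Matrix (Fin n) (Fin n) ℝ →+* Matrix (Fin n) (Fin n) ℂ) := by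
      show Continuous fun M : Matrix (Fin n) (Fin n) ℝ => M.map Complex.ofRealHom
      exact continuous_id.matrix_map Complex.continuous_ofReal
    have h1 := NormedSpace.map_exp (RingHom.mapMatrix (Complex.ofRealHom) :
        Matrix (Fin n) (Fin n) ℝ →+* Matrix (Fin n) (Fin n) ℂ) hc (t • Ar)
    have h2 : (RingHom.mapMatrix (Complex.ofRealHom) :
        Matrix (Fin n) (Fin n) ℝ →+* Matrix (Fin n) (Fin n) ℂ) (t • Ar)
        = (t : ℂ) • Ar.map (fun x : ℝ => (x : ℂ)) := by
      ext i j
      simp [RingHom.mapMatrix_apply, Matrix.map_apply, Matrix.smul_apply, Complex.ofReal_mul,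
        Complex.real_smul]
    have h3 : (exp (t • Ar)).map (fun x : ℝ => (x : ℂ))
        = exp ((t : ℂ) • Ar.map (fun x : ℝ => (x : ℂ))) := by
      rw [← h2]; exact h1
    rw [h3]
  -- entrywise decay
  have hentry : ∀ i j : Fin n, Tendsto (fun t : ℝ => exp (t • Ar) i j) atTop (nhds 0) := by
    intro i j
    have hcplx : Tendsto (fun t : ℝ =>
        exp ((t : ℂ) • Ar.map (fun x : ℝ => (x : ℂ))) i j) atTop (nhds 0) := by
      have h := matrix_exp_mulVec_tendsto _ hA (Pi.single j 1)
      have h' := (tendsto_pi_nhds.mp h) i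
      simpa [mulVec_single] using h'
    have hre := (Complex.continuous_re.tendsto 0).comp hcplx
    simp only [Complex.zero_re] at hre
    refine hre.congr fun t => ?_
    have hent := congrFun (congrFun (hmapc t) i) j
    simp only [Matrix.map_apply] at hent
    rw [Function.comp_apply, ← hent, Complex.ofReal_re]
  -- uniqueness of the solution: x t = exp (t A) x 0
  have hsol : ∀ t : ℝ, x t = exp (t • Ar) *ᵥ x 0 := by
    have hg : ∀ t : ℝ, HasDerivAt (fun s : ℝ => exp ((-s) • Ar) *ᵥ x s) 0 t := by
      intro t
      have hE : HasDerivAt (fun s : ℝ => exp ((-s) • Ar)) (-(exp ((-t) • Ar) * Ar)) t := by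
        have h1 := hasDerivAt_exp_smul_const (𝕂 := ℝ) Ar (-t)
        have h2 : HasDerivAt (fun s : ℝ => -s) (-1 : ℝ) t := (hasDerivAt_id t).neg
        have h3 := h1.scomp t h2
        have h4 : HasDerivAt (fun s : ℝ => exp ((-s) • Ar))
            ((-1 : ℝ) • (exp ((-t) • Ar) * Ar)) t := h3
        rw [neg_one_smul] at h4
        exact h4
      set E : ℝ → Matrix (Fin n) (Fin n) ℝ := fun s => exp ((-s) • Ar) with hEdef
      have key : ∀ i : Fin n, HasDerivAt (fun s : ℝ => (E s *ᵥ x s) i) 0 t := by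
        intro i
        -- entry evaluation as a continuous linear map
        have hEij : ∀ j : Fin n, HasDerivAt (fun s : ℝ => E s i j) ((-(E t * Ar)) i j) t := by
          intro j
          let ev : Matrix (Fin n) (Fin n) ℝ →ₗ[ℝ] ℝ :=
            { toFun := fun M => M i j, map_add' := fun _ _ => rfl, map_smul' := fun _ _ => rfl }
          let evC : Matrix (Fin n) (Fin n) ℝ →L[ℝ] ℝ :=
            ⟨ev, LinearMap.continuous_of_finiteDimensional ev⟩
          exact evC.hasFDerivAt.comp_hasDerivAt t hE
        have hxj : ∀ j : Fin n, HasDerivAt (fun s : ℝ => x s j) ((Ar *ᵥ x t) j) t := by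
          intro j
          exact (ContinuousLinearMap.proj j).hasFDerivAt.comp_hasDerivAt t (hx t)
        have hterm : ∀ j : Fin n, HasDerivAt (fun s : ℝ => E s i j * x s j)
            ((-(E t * Ar)) i j * x t j + E t i j * ((Ar *ᵥ x t) j)) t :=
          fun j => (hEij j).mul (hxj j)
        have hsum := HasDerivAt.sum (fun j (_ : j ∈ Finset.univ) => hterm j)
        have hz : ∑ j : Fin n, ((-(E t * Ar)) i j * x t j + E t i j * ((Ar *ᵥ x t) j)) = 0 := by
          rw [Finset.sum_add_distrib]
          have hA1 : ∑ j, (-(E t * Ar)) i j * x t j = -(((E t * Ar) *ᵥ x t) i) := by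
            simp [mulVec, dotProduct, neg_mul]
          have hA2 : ∑ j, E t i j * ((Ar *ᵥ x t) j) = ((E t * Ar) *ᵥ x t) i := by
            rw [← mulVec_mulVec]
            rfl
          rw [hA1, hA2, neg_add_cancel]
        rw [hz] at hsum
        refine hsum.congr_of_eventuallyEq (Filter.Eventually.of_forall fun s => ?_)
        simp [mulVec, dotProduct, Finset.sum_apply]
      have : HasDerivAt (fun s : ℝ => E s *ᵥ x s) (0 : Fin n → ℝ) t := by
        rw [hasDerivAt_pi]
        intro i
        simpa using key i
      exact this
    have hconst : ∀ t : ℝ, exp ((-t) • Ar) *ᵥ x t = exp ((-(0:ℝ)) • Ar) *ᵥ x 0 :=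
      fun t => is_const_of_deriv_eq_zero
        (fun s => (hg s).differentiableAt) (fun s => (hg s).deriv) t 0
    intro t
    have h0 : exp ((-(0:ℝ)) • Ar) *ᵥ x 0 = x 0 := by
      norm_num [NormedSpace.exp_zero, one_mulVec]
    have hgt : exp ((-t) • Ar) *ᵥ x t = x 0 := by rw [hconst t, h0]
    have hinv : exp (t • Ar) * exp ((-t) • Ar) = 1 := by
      rw [← Matrix.exp_add_of_commute _ _ (((Commute.refl Ar).smul_left t).smul_right (-t))]
      rw [← add_smul]
      norm_num [NormedSpace.exp_zero]
    calc x t = 1 *ᵥ x t := (one_mulVec _).symm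
      _ = (exp (t • Ar) * exp ((-t) • Ar)) *ᵥ x t := by rw [hinv]
      _ = exp (t • Ar) *ᵥ (exp ((-t) • Ar) *ᵥ x t) := by rw [← mulVec_mulVec]
      _ = exp (t • Ar) *ᵥ x 0 := by rw [hgt]
  -- conclude
  rw [tendsto_pi_nhds]
  intro i
  have hsumlim : Tendsto (fun t : ℝ => ∑ j : Fin n, exp (t • Ar) i j * x 0 j)
      atTop (nhds 0) := by
    have h := tendsto_finset_sum Finset.univ
      (fun j (_ : j ∈ Finset.univ) => (hentry i j).mul_const (x 0 j))
    simpa using h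
  refine Tendsto.congr (fun t => ?_) hsumlim
  rw [hsol t]
  simp [mulVec, dotProduct]


/-- LQR/Riccati stability: if `(A,B)` is stabilizable, `(A,C)` is detectable,
`R ≻ 0`, `Q = CᵀC`, and `P ⪰ 0` solves the algebraic Riccati equation, then the
closed-loop matrix `A − BR⁻¹BᵀP` is Hurwitz and every closed-loop solution
converges to zero. -/
theorem stmt_6 {n m p : ℕ}
    (A : Matrix (Fin n) (Fin n) ℝ) (B : Matrix (Fin n) (Fin m) ℝ)
    (C : Matrix (Fin p) (Fin n) ℝ)
    (R : Matrix (Fin m) (Fin m) ℝ) (Q : Matrix (Fin n) (Fin n) ℝ)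
    (P : Matrix (Fin n) (Fin n) ℝ)
    (hstab : ∃ K : Matrix (Fin m) (Fin n) ℝ, Hurwitz (A - B * K))
    (hdet : ∃ L : Matrix (Fin n) (Fin p) ℝ, Hurwitz (A - L * C))
    (hR : R.PosDef) (hQ : Q = Cᵀ * C) (hP : P.PosSemidef)
    (hric : P * A + Aᵀ * P - P * B * R⁻¹ * Bᵀ * P + Q = 0) :
    Hurwitz (A - B * R⁻¹ * Bᵀ * P) ∧
    ∀ x : ℝ → (Fin n → ℝ),
      (∀ t, HasDerivAt x ((A - B * R⁻¹ * Bᵀ * P) *ᵥ x t) t) →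
      Filter.Tendsto x Filter.atTop (nhds 0) := by
  have hhur : Hurwitz (A - B * R⁻¹ * Bᵀ * P) :=
    closed_loop_hurwitz A B C R Q P hdet hR hQ hP hric
  refine ⟨hhur, fun x hx => ?_⟩
  exact hurwitz_solution_tendsto (A - B * R⁻¹ * Bᵀ * P) hhur x hx
end
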